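/- Let Γ be a connected, non-complete strongly regular graph with parameters (n,k,λ,μ), which is an ℓ-multicover of a complete quotient K_{m+1} with orbit/fibre size b (so k = ℓm, all fibres are independent sets of size b, and each vertex has exactly ℓ neighbours in every other fibre). Then (b−1)μ = ℓm(ℓ−1); in particular ℓ ≥ 2. -/

import Mathlib

/-- If a connected non-complete strongly regular graph with parameters `(n,k,λ,μ)` is an
`ℓ`-multicover of the complete graph `K_{m+1}` with fibres of size `b` (so `k = ℓm`,
`n = (m+1)b`), then `(b-1)μ = ℓm(ℓ-1)`; in particular `ℓ ≥ 2`. -/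
theorem stmt10 {V : Type*} [Fintype V] (Γ : SimpleGraph V) [DecidableRel Γ.Adj]
    (n k l μ m b ℓ : ℕ)
    (hsrg : Γ.IsSRGWith n k l μ) (hconn : Γ.Connected)
    (hnc : ∃ u v : V, u ≠ v ∧ ¬ Γ.Adj u v)
    (f : V → Fin (m + 1))
    (hsize : ∀ i : Fin (m + 1), ({v : V | f v = i}).ncard = b)
    (hind : ∀ u v : V, Γ.Adj u v → f u ≠ f v)
    (hmc : ∀ (v : V) (i : Fin (m + 1)), f v ≠ i →
      ({w : V | Γ.Adj v w ∧ f w = i}).ncard = ℓ)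
    (hb : 2 ≤ b) (hm : 1 ≤ m) (hl : 1 ≤ ℓ)
    (hk : k = ℓ * m) (hn : n = (m + 1) * b) :
    ((b : ℤ) - 1) * μ = (ℓ : ℤ) * m * ((ℓ : ℤ) - 1) ∧ 2 ≤ ℓ := by
  classical
  obtain ⟨v⟩ := hconn.nonempty
  set i := f v with hi
  set F : Finset V := Finset.univ.filter (fun w => f w = i) with hFdef
  have hF : F.card = b := by
    have := hsize i
    rw [Set.ncard_eq_toFinset_card'] at this
    simpa [hFdef, Set.toFinset_setOf] using this
  have hvF : v ∈ F := by simp [hFdef, hi]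
  have hFe : (F.erase v).card = b - 1 := by rw [Finset.card_erase_of_mem hvF, hF]
  set Nv := Γ.neighborFinset v with hNvdef
  have hNv : Nv.card = k := hsrg.regular v
  -- μ ≥ 1
  have hμpos : 1 ≤ μ := by
    rcases Nat.eq_zero_or_pos μ with hμ0 | h; swap; · exact h
    exfalso
    obtain ⟨u0, v0, hne0, hnadj0⟩ := hnc
    have key : ∀ x y : V, Γ.Walk x y → x = y ∨ Γ.Adj x y := by
      intro x y p
      induction p with
      | nil => exact Or.inl rfl
      | @cons a c y h q ih =>
        rcases ih with rfl | hadj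
        · exact Or.inr h
        · by_cases hxy : a = y
          · exact Or.inl hxy
          · by_cases hxyadj : Γ.Adj a y
            · exact Or.inr hxyadj
            · exfalso
              have hc := hsrg.of_not_adj hxy hxyadj
              rw [hμ0] at hc
              have hmem : c ∈ Γ.commonNeighbors a y := ⟨h, hadj.symm⟩
              have hcard : 0 < Fintype.card (Γ.commonNeighbors a y) :=
                Fintype.card_pos_iff.mpr ⟨⟨c, hmem⟩⟩
              omega
    rcases (hconn.preconnected u0 v0).elim (fun p => key u0 v0 p) with h | h
    · exact hne0 h
    · exact hnadj0 h
  -- per-u count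
  have hu : ∀ u ∈ Nv, ((F.erase v).filter (fun w => Γ.Adj u w)).card = ℓ - 1 := by
    intro u hu
    have hadj : Γ.Adj v u := by rwa [SimpleGraph.mem_neighborFinset] at hu
    have hfu : f u ≠ i := fun h => hind v u hadj (hi.symm.trans h.symm)
    set A : Finset V := Finset.univ.filter (fun w => Γ.Adj u w ∧ f w = i) with hAdef
    have hA : A.card = ℓ := by
      have := hmc u i hfu
      rw [Set.ncard_eq_toFinset_card'] at this
      simpa [hAdef, Set.toFinset_setOf] using this
    have hvA : v ∈ A := by simp [hAdef, hadj.symm, hi]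
    have : (F.erase v).filter (fun w => Γ.Adj u w) = A.erase v := by
      ext w
      simp only [Finset.mem_filter, Finset.mem_erase, hFdef, hAdef, Finset.mem_univ,
        true_and]
      tauto
    rw [this, Finset.card_erase_of_mem hvA, hA]
  -- per-w count
  have hw : ∀ w ∈ F.erase v, (Nv.filter (fun u => Γ.Adj u w)).card = μ := by
    intro w hwm
    rw [Finset.mem_erase] at hwm
    obtain ⟨hwv, hwF⟩ := hwm
    have hfw : f w = i := by simpa [hFdef] using hwF
    have hnadj : ¬ Γ.Adj v w := fun h => hind v w h (hi ▸ hfw.symm ▸ rfl)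
    have hc := hsrg.of_not_adj (Ne.symm hwv) hnadj
    have : Nv.filter (fun u => Γ.Adj u w) = (Γ.commonNeighbors v w).toFinset := by
      ext u
      simp [hNvdef, SimpleGraph.mem_commonNeighbors, SimpleGraph.adj_comm]
    rw [this, Set.toFinset_card, hc]
  -- double counting
  have hdc : (∑ u ∈ Nv, ((F.erase v).filter (fun w => Γ.Adj u w)).card)
      = ∑ w ∈ F.erase v, (Nv.filter (fun u => Γ.Adj u w)).card := by
    simp only [Finset.card_filter]
    exact Finset.sum_comm
  rw [Finset.sum_congr rfl hu, Finset.sum_congr rfl hw, Finset.sum_const,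
    Finset.sum_const, smul_eq_mul, smul_eq_mul, hNv, hFe] at hdc
  -- hdc : k * (ℓ - 1) = (b - 1) * μ
  have hl2 : 2 ≤ ℓ := by
    rcases Nat.lt_or_ge ℓ 2 with h | h; swap; · exact h
    interval_cases ℓ
    simp only [Nat.sub_self, Nat.mul_zero] at hdc
    have h1 : 0 < (b - 1) * μ := Nat.mul_pos (by omega) hμpos
    omega
  constructor
  · have : ((b - 1 : ℕ) : ℤ) * μ = ((k : ℕ) : ℤ) * ((ℓ - 1 : ℕ) : ℤ) := by
      exact_mod_cast (congrArg (Nat.cast : ℕ → ℤ) hdc.symm)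
    rw [Nat.cast_sub (by omega), Nat.cast_sub (by omega), hk] at this
    push_cast at this ⊢
    linarith [this]
  · exact hl2
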